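/- arXiv:1203.6515 — 6 statements merged into one kernel-verified Lean document; each statement's English description precedes it below -/
import Mathlib

section
/- Let F be a finite nonempty d-uniform Ferrers hypergraph on vertex sets X^{(1)} ⊔ ... ⊔ X^{(d)} (each X^{(j)} a set of positive integers {1,...,n_j}), with d ≥ 2. For j ∈ {1,...,d}, let F_j = {(i_1,...,î_j,...,i_d) : ∃ i_j with (i_1,...,i_d) ∈ F}, and for S = (i_1,...,î_j,...,i_d) ∈ F_j set n_S = max{i_j : (i_1,...,i_j,...,i_d) ∈ F} and k_S = n_S − d + ∑_{p≠j} i_p. Then ∑_{j=1}^d ∑_{S∈F_j} n_S / C(d + k_S, d) = d. -/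
open Finset

private noncomputable def gterm (d : ℕ) (F : Finset (Fin d → ℕ)) (j : Fin d) (S : Fin d → ℕ) : ℚ :=
  ((sSup {m | Function.update S j m ∈ F} : ℕ) : ℚ) /
    ((d + (sSup {m | Function.update S j m ∈ F} + (∑ p ∈ Finset.univ.erase j, S p) - d)).choose d : ℚ)

private lemma exists_max (d : ℕ) (F : Finset (Fin d → ℕ)) (hne : F.Nonempty) :
    ∃ x ∈ F, ∀ y ∈ F, ¬ x < y := by
  obtain ⟨x, hx, hmax⟩ := F.exists_max_image (fun x => ∑ p, x p) hne
  refine ⟨x, hx, fun y hy hlt => ?_⟩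
  have h1 : ∑ p, x p < ∑ p, y p := by
    obtain ⟨hle, hne'⟩ := Pi.lt_def.mp hlt
    obtain ⟨p, hp⟩ := hne'
    exact Finset.sum_lt_sum (fun i _ => hle i) ⟨p, Finset.mem_univ p, hp⟩
  exact absurd (hmax y hy) (by omega)

private lemma setA_eq_Icc {d : ℕ} {F : Finset (Fin d → ℕ)}
    (hpos : ∀ x ∈ F, ∀ j, 1 ≤ x j)
    (hdc : ∀ x ∈ F, ∀ y : Fin d → ℕ, (∀ j, 1 ≤ y j) → (∀ j, y j ≤ x j) → y ∈ F)
    {x : Fin d → ℕ} (hx : x ∈ F) (hmax : ∀ y ∈ F, ¬ x < y) (j : Fin d) :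
    {m | Function.update x j m ∈ F} = Set.Icc 1 (x j) := by
  ext m
  simp only [Set.mem_setOf_eq, Set.mem_Icc]
  constructor
  · intro hm
    have h1 : 1 ≤ m := by simpa using hpos _ hm j
    refine ⟨h1, ?_⟩
    by_contra h
    push_neg at h
    refine hmax _ hm (lt_of_le_of_ne (fun p => ?_) (fun he => ?_))
    · rcases eq_or_ne p j with rfl | hp
      · simp [h.le]
      · simp [Function.update_of_ne hp]
    · have := congrFun he j
      simp at this
      omega
  · rintro ⟨h1, h2⟩
    refine hdc x hx _ (fun p => ?_) (fun p => ?_)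
    · rcases eq_or_ne p j with rfl | hp
      · simpa using h1
      · simpa [Function.update_of_ne hp] using hpos x hx p
    · rcases eq_or_ne p j with rfl | hp
      · simpa using h2
      · simp [Function.update_of_ne hp]

private lemma arith (d t : ℕ) (ht : 1 ≤ t) :
    ((t + d : ℕ) : ℚ) / ((t + d).choose d : ℚ) = (t : ℚ) / ((t + d - 1).choose d : ℚ) := by
  have key : (t + d) * ((t + d - 1).choose d) = ((t + d).choose d) * t := by
    have h1 : (t + d - 1).choose d = (t + d - 1).choose (t - 1) := by
      rw [← Nat.choose_symm (by omega : d ≤ t + d - 1)]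
      congr 1
      omega
    have h2 : (t + d).choose d = (t + d).choose t := by
      rw [← Nat.choose_symm (by omega : d ≤ t + d)]
      congr 1
      omega
    have h3 := Nat.add_one_mul_choose_eq (t + d - 1) (t - 1)
    rw [h1, h2]
    have e1 : t + d - 1 + 1 = t + d := by omega
    have e2 : t - 1 + 1 = t := by omega
    rw [e1, e2] at h3
    exact h3
  have hb : ((t + d).choose d : ℚ) ≠ 0 := by
    exact_mod_cast (Nat.choose_pos (by omega)).ne'
  have hs : ((t + d - 1).choose d : ℚ) ≠ 0 := by
    exact_mod_cast (Nat.choose_pos (by omega)).ne'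
  rw [div_eq_div_iff hb hs]
  exact_mod_cast (mul_comm ((t + d).choose d) t ▸ key)

private lemma sum_erase_eq {d : ℕ} (x : Fin d → ℕ) (j : Fin d) :
    ∑ p ∈ Finset.univ.erase j, (Function.update x j 0) p = (∑ p, x p) - x j := by
  have h1 : ∑ p ∈ Finset.univ.erase j, (Function.update x j 0) p
      = ∑ p ∈ Finset.univ.erase j, x p :=
    Finset.sum_congr rfl fun p hp =>
      Function.update_of_ne (Finset.ne_of_mem_erase hp) _ _
  have h2 : x j + ∑ p ∈ Finset.univ.erase j, x p = ∑ p, x p :=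
    Finset.add_sum_erase _ _ (Finset.mem_univ j)
  omega

private lemma g_at_max {d : ℕ} {F : Finset (Fin d → ℕ)}
    (hpos : ∀ x ∈ F, ∀ j, 1 ≤ x j)
    (hdc : ∀ x ∈ F, ∀ y : Fin d → ℕ, (∀ j, 1 ≤ y j) → (∀ j, y j ≤ x j) → y ∈ F)
    {x : Fin d → ℕ} (hx : x ∈ F) (hmax : ∀ y ∈ F, ¬ x < y)
    (hT : d ≤ ∑ p, x p) (j : Fin d) :
    gterm d F j (Function.update x j 0) = (x j : ℚ) / ((∑ p, x p).choose d : ℚ) := by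
  have hset : {m | Function.update (Function.update x j 0) j m ∈ F} = Set.Icc 1 (x j) := by
    rw [show {m | Function.update (Function.update x j 0) j m ∈ F}
        = {m | Function.update x j m ∈ F} from by
          ext m; simp [Function.update_idem]]
    exact setA_eq_Icc hpos hdc hx hmax j
  have hxj : 1 ≤ x j := hpos x hx j
  have hsup : sSup {m | Function.update (Function.update x j 0) j m ∈ F} = x j := by
    rw [hset]; exact csSup_Icc hxj
  have hle : x j ≤ ∑ p, x p := by
    have := Finset.add_sum_erase Finset.univ x (Finset.mem_univ j)
    omega
  unfold gterm
  rw [hsup, sum_erase_eq x j]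
  have he : d + (x j + ((∑ p, x p) - x j) - d) = ∑ p, x p := by omega
  rw [he]

private lemma key (d : ℕ) (hd : 2 ≤ d) : ∀ n : ℕ, ∀ F : Finset (Fin d → ℕ),
    F.card = n → F.Nonempty →
    (∀ x ∈ F, ∀ j, 1 ≤ x j) →
    (∀ x ∈ F, ∀ y : Fin d → ℕ, (∀ j, 1 ≤ y j) → (∀ j, y j ≤ x j) → y ∈ F) →
    ∑ j : Fin d, ∑ S ∈ F.image (fun x => Function.update x j 0), gterm d F j S = d := by
  intro n
  induction n using Nat.strong_induction_on with
  | _ n ih =>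
  intro F hcard hne hpos hdc
  obtain ⟨x, hx, hmax⟩ := exists_max d F hne
  have hT : d ≤ ∑ p, x p := by
    calc d = ∑ _p : Fin d, 1 := by simp
    _ ≤ ∑ p, x p := Finset.sum_le_sum fun p _ => hpos x hx p
  by_cases hone : F.card = 1
  · -- base case: F = {x} and x = const 1
    obtain ⟨a, ha⟩ := Finset.card_eq_one.mp hone
    have hxa : x = a := by rw [ha] at hx; simpa using hx
    subst hxa
    have hxall : ∀ p, x p = 1 := by
      intro p
      have h1 : (fun _ : Fin d => 1) ∈ F :=
        hdc x hx _ (fun _ => le_refl 1) (fun q => hpos x hx q)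
      rw [ha] at h1
      have h2 := Finset.mem_singleton.mp h1
      exact (congrFun h2.symm p)
    have hTd : ∑ p, x p = d := by simp [hxall]
    have hsum : ∀ j : Fin d,
        ∑ S ∈ F.image (fun y => Function.update y j 0), gterm d F j S = 1 := by
      intro j
      rw [ha, Finset.image_singleton, Finset.sum_singleton, ← ha]
      have hg := g_at_max hpos hdc hx hmax hT j
      rw [hg, hxall, hTd, Nat.choose_self]
      norm_num
    rw [Finset.sum_congr rfl fun j _ => hsum j]
    simp
  · -- inductive step
    have hn1 : 1 ≤ n := by
      rw [← hcard]; exact Finset.card_pos.mpr hne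
    have hn2 : 2 ≤ n := by omega
    set F' := F.erase x with hF'
    have hF'card : F'.card = n - 1 := by
      rw [hF', Finset.card_erase_of_mem hx, hcard]
    have hF'ne : F'.Nonempty := Finset.card_pos.mp (by omega)
    have hF'pos : ∀ y ∈ F', ∀ j, 1 ≤ y j := fun y hy => hpos y (Finset.mem_of_mem_erase hy)
    have hF'dc : ∀ y ∈ F', ∀ z : Fin d → ℕ, (∀ j, 1 ≤ z j) → (∀ j, z j ≤ y j) → z ∈ F' := by
      intro y hy z hz1 hzle
      have hyF : y ∈ F := Finset.mem_of_mem_erase hy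
      have hzF : z ∈ F := hdc y hyF z hz1 hzle
      rw [hF', Finset.mem_erase]
      refine ⟨fun hzx => ?_, hzF⟩
      have hxy : x < y := lt_of_le_of_ne (fun j => hzx ▸ hzle j)
        (fun h => (Finset.ne_of_mem_erase hy) h.symm)
      exact hmax y hyF hxy
    have hT1 : d + 1 ≤ ∑ p, x p := by
      by_contra h
      push_neg at h
      have hxall : ∀ p, x p = 1 := by
        by_contra hc
        push_neg at hc
        obtain ⟨p, hp⟩ := hc
        have h2 : 2 ≤ x p := by have := hpos x hx p; omega
        have h3 := Finset.add_sum_erase Finset.univ x (Finset.mem_univ p)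
        have hrest : (d - 1 : ℕ) ≤ ∑ q ∈ Finset.univ.erase p, x q := by
          calc (d - 1 : ℕ) = ∑ _q ∈ Finset.univ.erase p, 1 := by
                simp [Finset.card_erase_of_mem]
          _ ≤ _ := Finset.sum_le_sum fun q _ => hpos x hx q
        omega
      have hsub : ∀ y ∈ F, y = x := by
        intro y hy
        by_contra hyx
        exact hmax y hy (lt_of_le_of_ne (fun j => (hxall j) ▸ hpos y hy j) (Ne.symm hyx))
      have hsub2 : F ⊆ {x} := fun y hy => Finset.mem_singleton.mpr (hsub y hy)
      have := Finset.card_le_card hsub2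
      rw [Finset.card_singleton, hcard] at this
      omega
    -- agreement of terms away from update x j 0
    have hagree : ∀ j : Fin d, ∀ S' ∈ (F.image (fun y => Function.update y j 0)).erase
        (Function.update x j 0), gterm d F' j S' = gterm d F j S' := by
      intro j S' hS'
      obtain ⟨hSne, hSmem⟩ := Finset.mem_erase.mp hS'
      obtain ⟨y, hy, rfl⟩ := Finset.mem_image.mp hSmem
      have hset : {m | Function.update (Function.update y j 0) j m ∈ F'} =
          {m | Function.update (Function.update y j 0) j m ∈ F} := by
        ext m
        simp only [Set.mem_setOf_eq, hF', Finset.mem_erase]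
        refine ⟨fun h => h.2, fun h => ⟨fun heq => hSne ?_, h⟩⟩
        funext p
        rcases eq_or_ne p j with rfl | hp
        · simp
        · have h2 := congrFun heq p
          simp only [Function.update_of_ne hp] at h2 ⊢
          exact h2
      unfold gterm
      rw [hset]
    -- value of new term at update x j 0
    have hgF' : ∀ j : Fin d, gterm d F' j (Function.update x j 0) =
        ((x j - 1 : ℕ) : ℚ) / (((∑ p, x p) - 1).choose d : ℚ) := by
      intro j
      have hxj : 1 ≤ x j := hpos x hx j
      have hxle : x j ≤ ∑ p, x p := by
        have := Finset.add_sum_erase Finset.univ x (Finset.mem_univ j)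
        omega
      have hsetF : {m | Function.update x j m ∈ F} = Set.Icc 1 (x j) :=
        setA_eq_Icc hpos hdc hx hmax j
      have hset : {m | Function.update (Function.update x j 0) j m ∈ F'} =
          Set.Icc 1 (x j - 1) := by
        ext m
        simp only [Set.mem_setOf_eq, Function.update_idem, hF', Finset.mem_erase, Set.mem_Icc]
        have hmem : Function.update x j m ∈ F ↔ 1 ≤ m ∧ m ≤ x j := by
          rw [show (Function.update x j m ∈ F) = (m ∈ {m | Function.update x j m ∈ F}) from rfl,
            hsetF, Set.mem_Icc]
        have hxeq : Function.update x j m = x ↔ m = x j := by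
          constructor
          · intro h; have := congrFun h j; simpa using this
          · rintro rfl; exact Function.update_eq_self j x
        rw [hmem]
        constructor
        · rintro ⟨hne0, h1, h2⟩
          have : m ≠ x j := fun h => hne0 (hxeq.mpr h)
          omega
        · rintro ⟨h1, h2⟩
          refine ⟨fun h => ?_, h1, by omega⟩
          rw [hxeq] at h
          omega
      have hsup : sSup {m | Function.update (Function.update x j 0) j m ∈ F'} = x j - 1 := by
        rw [hset]
        rcases Nat.lt_or_ge (x j) 2 with hj | hj
        · have : x j - 1 = 0 := by omega
          rw [this, Set.Icc_eq_empty (by omega)]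
          simpa using Nat.sSup_empty
        · exact csSup_Icc (by omega)
      unfold gterm
      rw [hsup, sum_erase_eq x j]
      have he : d + (x j - 1 + ((∑ p, x p) - x j) - d) = (∑ p, x p) - 1 := by omega
      rw [he]
    -- image equalities
    have himg : ∀ j : Fin d, 2 ≤ x j →
        F'.image (fun y => Function.update y j 0) = F.image (fun y => Function.update y j 0) := by
      intro j hj
      apply Finset.Subset.antisymm (Finset.image_subset_image (Finset.erase_subset _ _))
      intro S' hS'
      obtain ⟨y, hy, rfl⟩ := Finset.mem_image.mp hS'
      rcases eq_or_ne y x with rfl | hyx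
      · refine Finset.mem_image.mpr ⟨Function.update y j (y j - 1), ?_, Function.update_idem _ _ _⟩
        rw [Finset.mem_erase]
        constructor
        · intro h
          have := congrFun h j
          simp at this
          omega
        · refine hdc y hy _ (fun p => ?_) (fun p => ?_)
          · rcases eq_or_ne p j with rfl | hp
            · simp; omega
            · simp only [Function.update_of_ne hp]; exact hpos y hy p
          · rcases eq_or_ne p j with rfl | hp
            · simp
            · simp [Function.update_of_ne hp]
      · exact Finset.mem_image.mpr ⟨y, Finset.mem_erase.mpr ⟨hyx, hy⟩, rfl⟩
    have himg1 : ∀ j : Fin d, x j = 1 →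
        F'.image (fun y => Function.update y j 0) =
          (F.image (fun y => Function.update y j 0)).erase (Function.update x j 0) := by
      intro j hj
      ext S'
      simp only [Finset.mem_image, Finset.mem_erase, hF']
      constructor
      · rintro ⟨y, ⟨hyx, hy⟩, rfl⟩
        refine ⟨fun heq => hyx ?_, y, hy, rfl⟩
        -- update y j 0 = update x j 0 → y = x
        have hyA : Function.update x j (y j) ∈ F := by
          have he : Function.update x j (y j) = y := by
            funext p
            rcases eq_or_ne p j with rfl | hp
            · simp
            · have h2 := congrFun heq p
              simp only [Function.update_of_ne hp] at h2 ⊢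
              exact h2.symm
          rw [he]; exact hy
        have hyj : y j ∈ Set.Icc 1 (x j) := by
          rw [← setA_eq_Icc hpos hdc hx hmax j]
          exact hyA
        rw [Set.mem_Icc] at hyj
        funext p
        rcases eq_or_ne p j with rfl | hp
        · omega
        · have h2 := congrFun heq p
          simpa only [Function.update_of_ne hp] using h2
      · rintro ⟨hne', y, hy, rfl⟩
        refine ⟨y, ⟨?_, hy⟩, rfl⟩
        rintro rfl
        exact hne' rfl
    -- per-direction identity
    have hperj : ∀ j : Fin d,
        ∑ S ∈ F.image (fun y => Function.update y j 0), gterm d F j S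
          = (∑ S ∈ F'.image (fun y => Function.update y j 0), gterm d F' j S)
            + ((x j : ℚ) / ((∑ p, x p).choose d : ℚ)
              - ((x j - 1 : ℕ) : ℚ) / (((∑ p, x p) - 1).choose d : ℚ)) := by
      intro j
      have hSmem : Function.update x j 0 ∈ F.image (fun y => Function.update y j 0) :=
        Finset.mem_image_of_mem _ hx
      have hxj : 1 ≤ x j := hpos x hx j
      rcases Nat.lt_or_ge (x j) 2 with hj | hj
      · have hj1 : x j = 1 := by omega
        rw [himg1 j hj1]
        rw [Finset.sum_congr rfl (fun S' hS' => hagree j S' hS')]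
        rw [← Finset.add_sum_erase _ _ hSmem]
        rw [g_at_max hpos hdc hx hmax hT j]
        have hz : ((x j - 1 : ℕ) : ℚ) = 0 := by rw [hj1]; norm_num
        rw [hz]
        ring
      · rw [himg j hj]
        rw [← Finset.add_sum_erase _ (gterm d F j) hSmem,
          ← Finset.add_sum_erase _ (gterm d F' j) hSmem]
        rw [Finset.sum_congr rfl (fun S' hS' => hagree j S' hS')]
        rw [g_at_max hpos hdc hx hmax hT j, hgF' j]
        ring
    have ihF' := ih (n - 1) (by omega) F' hF'card hF'ne hF'pos hF'dc
    rw [Finset.sum_congr rfl fun j _ => hperj j, Finset.sum_add_distrib, ihF']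
    have hzero : ∑ j : Fin d, ((x j : ℚ) / ((∑ p, x p).choose d : ℚ)
        - ((x j - 1 : ℕ) : ℚ) / (((∑ p, x p) - 1).choose d : ℚ)) = 0 := by
      rw [Finset.sum_sub_distrib, ← Finset.sum_div, ← Finset.sum_div]
      have h1 : ∑ j : Fin d, (x j : ℚ) = ((∑ p, x p : ℕ) : ℚ) := by push_cast; ring
      have h2 : ∑ j : Fin d, ((x j - 1 : ℕ) : ℚ) = (((∑ p, x p) - d : ℕ) : ℚ) := by
        have hn : ∑ j : Fin d, (x j - 1) = (∑ p, x p) - d := by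
          rw [Finset.sum_tsub_distrib _ (fun i _ => hpos x hx i)]
          simp
        rw [← hn]
        push_cast
        ring
      rw [h1, h2]
      set t := (∑ p, x p) - d with htdef
      have htd : ∑ p, x p = t + d := by omega
      rw [sub_eq_zero, htd]
      exact arith d t (by omega)
    rw [hzero, add_zero]

/-- The curious Ferrers identity: ∑_{j=1}^d ∑_{S∈F_j} n_S / C(d+k_S, d) = d.
    F_j is encoded as the image of F under setting the j-th coordinate to 0,
    n_S is the largest m with the j-th coordinate restored to m still in F, and
    k_S = n_S − d + ∑_{p≠j} S_p. -/
theorem stmt_3 (d : ℕ) (hd : 2 ≤ d) (F : Finset (Fin d → ℕ)) (hne : F.Nonempty)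
    (hpos : ∀ x ∈ F, ∀ j, 1 ≤ x j)
    (hdc : ∀ x ∈ F, ∀ y : Fin d → ℕ, (∀ j, 1 ≤ y j) → (∀ j, y j ≤ x j) → y ∈ F) :
    ∑ j : Fin d, ∑ S ∈ F.image (fun x => Function.update x j 0),
      (let nS : ℕ := sSup {m | Function.update S j m ∈ F}
       let kS : ℕ := nS + (∑ p ∈ Finset.univ.erase j, S p) - d
       (nS : ℚ) / ((d + kS).choose d : ℚ)) = (d : ℚ) := by
  have h := key d hd F.card F rfl hne hpos hdc
  calc ∑ j : Fin d, ∑ S ∈ F.image (fun x => Function.update x j 0),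
      (let nS : ℕ := sSup {m | Function.update S j m ∈ F}
       let kS : ℕ := nS + (∑ p ∈ Finset.univ.erase j, S p) - d
       (nS : ℚ) / ((d + kS).choose d : ℚ))
      = ∑ j : Fin d, ∑ S ∈ F.image (fun x => Function.update x j 0), gterm d F j S := rfl
    _ = d := h
end

section
/- Let F be a d-uniform Ferrers hypergraph with d ≥ 2, and adopt the notation F_j, n_S, k_S as in the Boij-Söderberg quotient decomposition. Then for every integer i ≥ 1: (d + i − 1) · ∑_{(i_1,...,i_d)∈F} C(i_1+...+i_d − d, i−1) = ∑_{j=1}^d ∑_{S∈F_j} n_S · C(k_S, i−1). -/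
/-- The counting identity behind the Boij–Söderberg decomposition of R/I(F):
    (d+i−1)·∑_{x∈F} C(∑x−d, i−1) = ∑_{j=1}^d ∑_{S∈F_j} n_S·C(k_S, i−1). -/
theorem stmt_4 (d : ℕ) (hd : 2 ≤ d) (F : Finset (Fin d → ℕ))
    (hpos : ∀ x ∈ F, ∀ j, 1 ≤ x j)
    (hdc : ∀ x ∈ F, ∀ y : Fin d → ℕ, (∀ j, 1 ≤ y j) → (∀ j, y j ≤ x j) → y ∈ F)
    (i : ℕ) (hi : 1 ≤ i) :
    (d + i - 1) * ∑ x ∈ F, ((∑ j, x j) - d).choose (i - 1) =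
      ∑ j : Fin d, ∑ S ∈ F.image (fun x => Function.update x j 0),
        (let nS : ℕ := sSup {m | Function.update S j m ∈ F}
         let kS : ℕ := nS + (∑ p ∈ Finset.univ.erase j, S p) - d
         nS * kS.choose (i - 1)) := by
  classical
  set h : Fin d → (Fin d → ℕ) → ℕ := fun j y =>
    y j * ((∑ p, y p) - d).choose (i - 1)
      - (y j - 1) * ((∑ p, y p) - d - 1).choose (i - 1) with hh
  -- Step 1: column sums
  have key : ∀ j : Fin d,
      (∑ S ∈ F.image (fun x => Function.update x j 0),
        (let nS : ℕ := sSup {m | Function.update S j m ∈ F}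
         let kS : ℕ := nS + (∑ p ∈ Finset.univ.erase j, S p) - d
         nS * kS.choose (i - 1)))
      = ∑ x ∈ F, h j x := by
    intro j
    refine Finset.sum_image' _ ?_
    intro x hx
    set S : Fin d → ℕ := Function.update x j 0 with hS
    set A : Set ℕ := {m | Function.update S j m ∈ F} with hA
    set n : ℕ := sSup A with hn
    have hSx : ∀ p, p ≠ j → S p = x p := by
      intro p hp; simp [hS, Function.update_of_ne hp]
    have hxS : Function.update S j (x j) = x := by
      funext p
      by_cases hp : p = j
      · subst hp; simp
      · simp [Function.update_of_ne hp, hSx p hp]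
    have hxjA : x j ∈ A := by
      show Function.update S j (x j) ∈ F
      rw [hxS]; exact hx
    have hbdd : BddAbove A := by
      apply Set.Finite.bddAbove
      apply (F.image (fun y => y j)).finite_toSet.subset
      intro m hm
      simp only [Finset.coe_image, Set.mem_image]
      exact ⟨Function.update S j m, hm, by simp⟩
    have hnA : n ∈ A := Nat.sSup_mem ⟨x j, hxjA⟩ hbdd
    have hn1 : 1 ≤ n := le_trans (hpos x hx j) (le_csSup hbdd hxjA)
    have memA : ∀ m, m ∈ A ↔ 1 ≤ m ∧ m ≤ n := by
      intro m
      constructor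
      · intro hm
        refine ⟨?_, le_csSup hbdd hm⟩
        by_contra hm0
        have hm0 : m = 0 := by omega
        subst hm0
        have : Function.update S j 0 = S := by
          funext p
          by_cases hp : p = j
          · subst hp; simp [hS]
          · simp [Function.update_of_ne hp]
        have hSF : S ∈ F := by rw [← this]; exact hm
        have := hpos S hSF j
        simp [hS] at this
      · rintro ⟨h1, h2⟩
        refine hdc _ hnA _ ?_ ?_
        · intro p
          by_cases hp : p = j
          · subst hp; simpa using h1
          · rw [Function.update_of_ne hp, hSx p hp]; exact hpos x hx p
        · intro p
          by_cases hp : p = j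
          · subst hp; simpa using h2
          · simp [Function.update_of_ne hp]
    -- fiber description
    have fiber : F.filter (fun y => Function.update y j 0 = Function.update x j 0)
        = (Finset.Icc 1 n).image (fun m => Function.update S j m) := by
      ext y
      simp only [Finset.mem_filter, Finset.mem_image, Finset.mem_Icc]
      constructor
      · rintro ⟨hyF, hy⟩
        have hyS : Function.update S j (y j) = y := by
          funext p
          by_cases hp : p = j
          · subst hp; simp
          · have hyp := congrFun hy p
            rw [Function.update_of_ne hp, Function.update_of_ne hp] at hyp
            rw [Function.update_of_ne hp, hSx p hp, ← hyp]
        have : y j ∈ A := by show Function.update S j (y j) ∈ F; rw [hyS]; exact hyF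
        rw [memA] at this
        exact ⟨y j, this, hyS⟩
      · rintro ⟨m, hm, rfl⟩
        rw [← memA] at hm
        refine ⟨hm, ?_⟩
        funext p
        by_cases hp : p = j
        · subst hp; simp [hS]
        · simp [Function.update_of_ne hp, hSx p hp]
    set σ : ℕ := ∑ p ∈ Finset.univ.erase j, S p with hσ
    have hσd : d - 1 ≤ σ := by
      have : ∑ p ∈ Finset.univ.erase j, 1 ≤ σ := by
        apply Finset.sum_le_sum
        intro p hp
        rw [hSx p (Finset.ne_of_mem_erase hp)]
        exact hpos x hx p
      simpa [Finset.card_erase_of_mem, Finset.card_univ] using this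
    set g : ℕ → ℕ := fun m => m * (m + σ - d).choose (i - 1) with hg
    have hgmono : Monotone g := by
      intro a b hab
      exact Nat.mul_le_mul hab (Nat.choose_le_choose _ (by omega))
    have sumy : ∀ m : ℕ, (∑ q, Function.update S j m q) = m + σ := by
      intro m
      rw [Finset.sum_update_of_mem (Finset.mem_univ j), Finset.sdiff_singleton_eq_erase, ← hσ]
    show (let nS : ℕ := sSup {m | Function.update (Function.update x j 0) j m ∈ F}
         let kS : ℕ := nS + (∑ p ∈ Finset.univ.erase j, Function.update x j 0 p) - d
         nS * kS.choose (i - 1)) = _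
    rw [fiber, Finset.sum_image (fun a _ b _ hab => Function.update_injective S j hab)]
    have hterm : ∀ m ∈ Finset.Icc 1 n, h j (Function.update S j m) = g m - g (m - 1) := by
      intro m hm
      rw [Finset.mem_Icc] at hm
      simp only [hh, hg, sumy, Function.update_self]
      have heq : m + σ - d - 1 = m - 1 + σ - d := by omega
      rw [heq]
    rw [Finset.sum_congr rfl hterm]
    have : ∑ m ∈ Finset.Icc 1 n, (g m - g (m - 1))
        = ∑ r ∈ Finset.range n, (g (r + 1) - g r) := by
      rw [← Finset.Ico_add_one_right_eq_Icc, Finset.sum_Ico_eq_sum_range]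
      simp [Nat.add_sub_cancel_left, Nat.add_comm 1]
    rw [this, Finset.sum_range_tsub hgmono]
    show n * (n + (∑ p ∈ Finset.univ.erase j, Function.update x j 0 p) - d).choose (i - 1)
        = g n - g 0
    simp only [hg, ← hS, ← hσ]
    simp
  simp only [key]
  rw [Finset.sum_comm]
  rw [Finset.mul_sum]
  apply Finset.sum_congr rfl
  intro x hx
  -- per-element identity
  set t : ℕ := ∑ p, x p with ht
  have htd : d ≤ t := by
    have : ∑ p : Fin d, 1 ≤ t := Finset.sum_le_sum (fun p _ => hpos x hx p)
    simpa [Finset.card_univ] using this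
  set b : ℕ := t - d with hb
  have hc0c1 : (b - 1).choose (i - 1) ≤ b.choose (i - 1) :=
    Nat.choose_le_choose _ (by omega)
  have hsub : ∑ j, h j x = (∑ j, x j * b.choose (i - 1)) - ∑ j, (x j - 1) * (b - 1).choose (i - 1) := by
    apply Finset.sum_tsub_distrib
    intro p _
    exact Nat.mul_le_mul (by omega) hc0c1
  have h1 : ∑ j, x j * b.choose (i - 1) = t * b.choose (i - 1) := by
    rw [← Finset.sum_mul]
  have h2 : ∑ j : Fin d, (x j - 1) * (b - 1).choose (i - 1) = b * (b - 1).choose (i - 1) := by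
    rw [← Finset.sum_mul]
    congr 1
    have : ∑ j : Fin d, (x j - 1) = (∑ j, x j) - ∑ j : Fin d, 1 :=
      Finset.sum_tsub_distrib _ (fun p _ => hpos x hx p)
    rw [this]
    simp [Finset.card_univ, hb, ht]
  rw [hsub, h1, h2]
  -- now:  t * C(b,i-1) - b * C(b-1,i-1) = (d+i-1) * C(b,i-1)
  have hkey : b * (b - 1).choose (i - 1) = b.choose (i - 1) * (b - (i - 1)) := by
    rcases Nat.eq_zero_or_pos b with hb0 | hb0
    · rw [hb0]; simp
    · have := Nat.add_one_mul_choose_eq (b - 1) (i - 1)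
      rw [(by omega : b - 1 + 1 = b), (by omega : i - 1 + 1 = i)] at this
      have h2 := Nat.choose_succ_right_eq b (i - 1)
      rw [(by omega : i - 1 + 1 = i)] at h2
      calc b * (b - 1).choose (i - 1) = b.choose i * i := this
        _ = b.choose (i - 1) * (b - (i - 1)) := h2
  rw [hkey]
  rcases Nat.lt_or_ge b (i - 1) with hbi | hbi
  · rw [Nat.choose_eq_zero_of_lt hbi]
    simp
  · have : t * b.choose (i - 1) - b.choose (i - 1) * (b - (i - 1))
        = (t - (b - (i - 1))) * b.choose (i - 1) := by
      rw [Nat.sub_mul, mul_comm (b.choose (i-1))]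
    rw [this]
    congr 1
    omega
end

section
/- Fix positive integers c, s, t with s ≥ 2t, and for 1 ≤ i ≤ c−1 let a_i = C(c+t−1, i+t)·C(t−1+i, t). For 1 ≤ j ≤ c, let σ_j = (0, d_{j,1}, ..., d_{j,c−1}, s+c) where d_{j,k} = t+k if 1 ≤ k ≤ c−j and d_{j,k} = s−t+k if c−j+1 ≤ k ≤ c−1. Set b = (s+1−2t)·(t+c−1)!/t! and a = (s+1−t)·(t+c−1)!/t!. Then for each i with 1 ≤ i ≤ c−1: a_i = a·β_i(π_{σ_1}) + b·∑_{j=2}^{c−i} β_i(π_{σ_j}), where β_i(π_{σ_j}) = ∏_{k≠i} 1/|d_{j,i} − d_{j,k}| (indices including the entries 0 and s+c). -/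
open Finset

private lemma prod_cast_Icc (u : ℕ) : ∀ n : ℕ,
    ∏ k ∈ Finset.Icc 1 n, ((u : ℚ) + k) = ((u + n).factorial : ℚ) / (u.factorial : ℚ)
  | 0 => by
    have h0 : ((u.factorial : ℚ)) ≠ 0 := Nat.cast_ne_zero.mpr (Nat.factorial_ne_zero u)
    simp [div_self h0]
  | n+1 => by
    rw [Finset.prod_Icc_succ_top (by omega), prod_cast_Icc u n]
    have h : (u + (n+1)).factorial = (u + n).factorial * (u + n + 1) := by
      rw [show u + (n+1) = (u+n) + 1 from rfl, Nat.factorial_succ]; ring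
    have h0 : ((u.factorial : ℚ)) ≠ 0 := Nat.cast_ne_zero.mpr (Nat.factorial_ne_zero u)
    rw [h, div_mul_eq_mul_div, div_eq_div_iff h0 h0]
    push_cast
    ring

private lemma prod_id_Icc (n : ℕ) : ∏ k ∈ Finset.Icc 1 n, (k : ℚ) = n.factorial := by
  have := prod_cast_Icc 0 n
  simpa using this

private lemma prod_reflect (n : ℕ) :
    ∏ k ∈ Finset.Icc 1 n, ((n : ℚ) + 1 - k) = n.factorial := by
  rw [← prod_id_Icc n]
  refine Finset.prod_nbij' (fun k => n + 1 - k) (fun k => n + 1 - k) ?_ ?_ ?_ ?_ ?_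
  · intro a ha; simp only [Finset.mem_Icc] at *; omega
  · intro a ha; simp only [Finset.mem_Icc] at *; omega
  · intro a ha; simp only [Finset.mem_Icc] at *; omega
  · intro a ha; simp only [Finset.mem_Icc] at *; omega
  · intro a ha; simp only [Finset.mem_Icc] at ha
    rw [Nat.cast_sub (by omega)]; push_cast; ring

private lemma prod_Icc_shift (a n : ℕ) (f : ℕ → ℚ) :
    ∏ k ∈ Finset.Icc (a+1) (a+n), f k = ∏ l ∈ Finset.Icc 1 n, f (a + l) := by
  refine Finset.prod_nbij' (fun k => k - a) (fun l => a + l) ?_ ?_ ?_ ?_ ?_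
  · intro x hx; simp only [Finset.mem_Icc] at hx
    show x - a ∈ Finset.Icc 1 n; simp only [Finset.mem_Icc]; omega
  · intro x hx; simp only [Finset.mem_Icc] at hx
    show a + x ∈ Finset.Icc (a+1) (a+n); simp only [Finset.mem_Icc]; omega
  · intro x hx; simp only [Finset.mem_Icc] at hx
    show a + (x - a) = x; omega
  · intro x hx; simp only [Finset.mem_Icc] at hx
    show (a + x) - a = x; omega
  · intro x hx; simp only [Finset.mem_Icc] at hx
    show f x = f (a + (x - a)); congr 1; omega

private lemma hockey (u : ℕ) : ∀ m : ℕ,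
    ∑ l ∈ Finset.range m, ((u + l).factorial : ℚ) / (l.factorial : ℚ)
      = ((u + m).factorial : ℚ) * m / (((u : ℚ) + 1) * (m.factorial : ℚ))
  | 0 => by simp
  | m+1 => by
    rw [Finset.sum_range_succ, hockey u m]
    have h1 : ((m.factorial : ℚ)) ≠ 0 := Nat.cast_ne_zero.mpr (Nat.factorial_ne_zero m)
    have h2 : ((u : ℚ) + 1) ≠ 0 := by positivity
    have h3 : (u + (m+1)).factorial = (u+m).factorial * (u+m+1) := by
      rw [show u + (m+1) = (u+m)+1 from rfl, Nat.factorial_succ]; ring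
    have h4 : ((m+1).factorial : ℚ) = (m+1) * m.factorial := by
      rw [Nat.factorial_succ]; push_cast; ring
    rw [h3, h4]
    have h5 : ((m:ℚ)+1) ≠ 0 := by positivity
    field_simp
    push_cast
    ring

/-- The degree sequence σ_j = (0, d_{j,1},...,d_{j,c−1}, s+c) with
    d_{j,k} = t+k for 1 ≤ k ≤ c−j and d_{j,k} = s−t+k for c−j+1 ≤ k ≤ c−1. -/
def gorSeq (c s t j : ℕ) : ℕ → ℤ := fun k =>
  if k = 0 then 0
  else if k = c then (s : ℤ) + c
  else if k ≤ c - j then (t : ℤ) + k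
  else (s : ℤ) - t + k

/-- Entry in homological degree i of the pure diagram with degree sequence σ
    (indexed by 0,...,c). -/
def pureEntry (c : ℕ) (σ : ℕ → ℤ) (i : ℕ) : ℚ :=
  ∏ k ∈ (Finset.range (c + 1)).erase i, (1 : ℚ) / ((|σ i - σ k| : ℤ) : ℚ)

private lemma pureEntry_eval (u t i q r : ℕ) (ht : 1 ≤ t) :
    pureEntry (i+1+q+1+r) (gorSeq (i+1+q+1+r) (u+2*t) t (q+1)) (i+1) =
      (((u+r).factorial : ℚ)) /
        (((t+i+1 : ℕ) : ℚ) * ((u+t+q+1+r : ℕ) : ℚ) * (i.factorial : ℚ)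
          * (r.factorial : ℚ) * ((u+q+r).factorial : ℚ)) := by
  set c := i+1+q+1+r with hc
  set σ := gorSeq c (u+2*t) t (q+1) with hσ
  have hσi : σ (i+1) = (t : ℤ) + (i+1) := by
    rw [hσ]; unfold gorSeq
    rw [if_neg (by omega), if_neg (by omega), if_pos (by omega)]
    push_cast; ring
  have hσ0 : σ 0 = 0 := by rw [hσ]; unfold gorSeq; rw [if_pos rfl]
  have hσc : σ c = ((u:ℤ) + 2*t) + c := by
    rw [hσ]; unfold gorSeq; rw [if_neg (by omega), if_pos rfl]; push_cast; ring
  have hσA : ∀ k, 1 ≤ k → k ≤ i + 1 + r → σ k = (t : ℤ) + k := by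
    intro k h1 h2
    rw [hσ]; unfold gorSeq
    rw [if_neg (by omega), if_neg (by omega), if_pos (by omega)]
  have hσC : ∀ k, i + 2 + r ≤ k → k ≤ c - 1 → σ k = (u:ℤ) + t + k := by
    intro k h1 h2
    rw [hσ]; unfold gorSeq
    rw [if_neg (by omega), if_neg (by omega), if_neg (by omega)]
    push_cast; ring
  have hset : (Finset.range (c+1)).erase (i+1) =
      (({0} : Finset ℕ) ∪ Finset.Icc 1 i) ∪
        (Finset.Icc (i+2) (i+1+r) ∪ Finset.Icc (i+2+r) (i+1+r+q)) ∪ {c} := by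
    ext k
    simp only [Finset.mem_erase, Finset.mem_range, Finset.mem_union, Finset.mem_Icc,
      Finset.mem_singleton]
    omega
  have d1 : Disjoint ((({0} : Finset ℕ) ∪ Finset.Icc 1 i) ∪
      (Finset.Icc (i+2) (i+1+r) ∪ Finset.Icc (i+2+r) (i+1+r+q))) ({c} : Finset ℕ) := by
    simp only [Finset.disjoint_left, Finset.mem_union, Finset.mem_Icc, Finset.mem_singleton]
    omega
  have d2 : Disjoint (({0} : Finset ℕ) ∪ Finset.Icc 1 i)
      (Finset.Icc (i+2) (i+1+r) ∪ Finset.Icc (i+2+r) (i+1+r+q)) := by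
    simp only [Finset.disjoint_left, Finset.mem_union, Finset.mem_Icc, Finset.mem_singleton]
    omega
  have d3 : Disjoint ({0} : Finset ℕ) (Finset.Icc 1 i) := by
    simp only [Finset.disjoint_left, Finset.mem_Icc, Finset.mem_singleton]
    omega
  have d4 : Disjoint (Finset.Icc (i+2) (i+1+r)) (Finset.Icc (i+2+r) (i+1+r+q)) := by
    simp only [Finset.disjoint_left, Finset.mem_Icc]
    omega
  rw [pureEntry, hset, Finset.prod_union d1, Finset.prod_union d2, Finset.prod_union d3,
    Finset.prod_union d4, Finset.prod_singleton, Finset.prod_singleton]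
  have P0 : (1 : ℚ) / ((|σ (i+1) - σ 0| : ℤ) : ℚ) = 1 / ((t+i+1 : ℕ) : ℚ) := by
    rw [hσi, hσ0]
    rw [show |(t:ℤ) + ((i:ℤ)+1) - 0| = ((t+i+1 : ℕ) : ℤ) by rw [Int.abs_eq_natAbs]; omega]
    push_cast; ring
  have Pc : (1 : ℚ) / ((|σ (i+1) - σ c| : ℤ) : ℚ) = 1 / ((u+t+q+1+r : ℕ) : ℚ) := by
    rw [hσi, hσc]
    rw [show |(t:ℤ) + ((i:ℤ)+1) - ((u:ℤ) + 2*(t:ℤ) + (c:ℤ))| = ((u+t+q+1+r : ℕ) : ℤ) by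
      rw [Int.abs_eq_natAbs]; omega]
    push_cast; ring
  have PA : ∏ k ∈ Finset.Icc 1 i, (1 : ℚ) / ((|σ (i+1) - σ k| : ℤ) : ℚ)
      = 1 / (i.factorial : ℚ) := by
    have : ∀ k ∈ Finset.Icc 1 i, (1 : ℚ) / ((|σ (i+1) - σ k| : ℤ) : ℚ)
        = ((i:ℚ) + 1 - k)⁻¹ := by
      intro k hk
      simp only [Finset.mem_Icc] at hk
      rw [hσi, hσA k (by omega) (by omega)]
      rw [show |(t:ℤ) + ((i:ℤ)+1) - ((t:ℤ) + (k:ℤ))| = ((i+1-k : ℕ) : ℤ) by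
        rw [Int.abs_eq_natAbs]; omega]
      rw [one_div, Int.cast_natCast, Nat.cast_sub (by omega)]
      push_cast; ring_nf
    rw [Finset.prod_congr rfl this, Finset.prod_inv_distrib, prod_reflect, one_div]
  have PB : ∏ k ∈ Finset.Icc (i+2) (i+1+r), (1 : ℚ) / ((|σ (i+1) - σ k| : ℤ) : ℚ)
      = 1 / (r.factorial : ℚ) := by
    have e1 : ∀ k ∈ Finset.Icc (i+2) (i+1+r), (1 : ℚ) / ((|σ (i+1) - σ k| : ℤ) : ℚ)
        = ((k - (i+1) : ℕ) : ℚ)⁻¹ := by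
      intro k hk
      simp only [Finset.mem_Icc] at hk
      rw [hσi, hσA k (by omega) (by omega)]
      rw [show |(t:ℤ) + ((i:ℤ)+1) - ((t:ℤ) + (k:ℤ))| = ((k-(i+1) : ℕ) : ℤ) by
        rw [Int.abs_eq_natAbs]; omega]
      rw [one_div, Int.cast_natCast]
    rw [Finset.prod_congr rfl e1, Finset.prod_inv_distrib]
    rw [show Finset.Icc (i+2) (i+1+r) = Finset.Icc ((i+1)+1) ((i+1)+r) by ring_nf]
    rw [prod_Icc_shift (i+1) r (fun k => ((k - (i+1) : ℕ) : ℚ))]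
    have : ∀ l ∈ Finset.Icc 1 r, (((i+1) + l - (i+1) : ℕ) : ℚ) = (l : ℚ) := by
      intro l hl; congr 1; omega
    rw [Finset.prod_congr rfl this, prod_id_Icc, one_div]
  have PC : ∏ k ∈ Finset.Icc (i+2+r) (i+1+r+q), (1 : ℚ) / ((|σ (i+1) - σ k| : ℤ) : ℚ)
      = ((u+r).factorial : ℚ) / ((u+r+q).factorial : ℚ) := by
    have e1 : ∀ k ∈ Finset.Icc (i+2+r) (i+1+r+q), (1 : ℚ) / ((|σ (i+1) - σ k| : ℤ) : ℚ)
        = ((u + k - (i+1) : ℕ) : ℚ)⁻¹ := by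
      intro k hk
      simp only [Finset.mem_Icc] at hk
      rw [hσi, hσC k (by omega) (by omega)]
      rw [show |(t:ℤ) + ((i:ℤ)+1) - ((u:ℤ) + (t:ℤ) + (k:ℤ))| = ((u+k-(i+1) : ℕ) : ℤ) by
        rw [Int.abs_eq_natAbs]; omega]
      rw [one_div, Int.cast_natCast]
    rw [Finset.prod_congr rfl e1, Finset.prod_inv_distrib]
    rw [show Finset.Icc (i+2+r) (i+1+r+q) = Finset.Icc ((i+1+r)+1) ((i+1+r)+q) by ring_nf]
    rw [prod_Icc_shift (i+1+r) q (fun k => ((u + k - (i+1) : ℕ) : ℚ))]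
    have : ∀ l ∈ Finset.Icc 1 q, ((u + ((i+1+r) + l) - (i+1) : ℕ) : ℚ) = (((u+r:ℕ) : ℚ) + (l:ℚ)) := by
      intro l hl
      rw [show u + ((i+1+r) + l) - (i+1) = (u + r) + l by omega, Nat.cast_add]
    rw [Finset.prod_congr rfl this, prod_cast_Icc (u+r) q]
    rw [inv_div]
  rw [P0, Pc, PA, PB, PC]
  have n1 : ((t+i+1 : ℕ) : ℚ) ≠ 0 := by positivity
  have n2 : ((u+t+q+1+r : ℕ) : ℚ) ≠ 0 := by positivity
  have n3 : ((i.factorial : ℚ)) ≠ 0 := Nat.cast_ne_zero.mpr (Nat.factorial_ne_zero _)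
  have n4 : ((r.factorial : ℚ)) ≠ 0 := Nat.cast_ne_zero.mpr (Nat.factorial_ne_zero _)
  have n5 : (((u+r+q).factorial : ℚ)) ≠ 0 := Nat.cast_ne_zero.mpr (Nat.factorial_ne_zero _)
  have n6 : (((u+q+r).factorial : ℚ)) ≠ 0 := Nat.cast_ne_zero.mpr (Nat.factorial_ne_zero _)
  rw [show u+q+r = u+r+q from by ring]
  field_simp

private lemma pureEntry_eval₁ {u t i m c s : ℕ} (ht : 1 ≤ t) (hc : c = i+1+1+m)
    (hs : s = u+2*t) :
    pureEntry c (gorSeq c s t 1) (i+1) =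
      ((u+m).factorial : ℚ) / (((t+i+1:ℕ):ℚ) * ((u+t+m+1:ℕ):ℚ) * (i.factorial:ℚ)
        * (m.factorial:ℚ) * ((u+m).factorial:ℚ)) := by
  subst hc hs
  have h := pureEntry_eval u t i 0 m ht
  rw [show i+1+0+1+m = i+1+1+m from by ring] at h
  rw [show (0:ℕ)+1 = 1 from by norm_num] at h
  rw [h, show u+t+0+1+m = u+t+m+1 from by ring, show u+0+m = u+m from by ring]

private lemma pureEntry_eval'' {u t i m c s : ℕ} (ht : 1 ≤ t) (hc : c = i+1+1+m)
    (hs : s = u+2*t) {j : ℕ} (hj1 : 2 ≤ j) (hj2 : j ≤ m+1) :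
    pureEntry c (gorSeq c s t j) (i+1) =
      (((u+(m+1-j)).factorial : ℚ) / (((m+1-j).factorial : ℚ))) *
        (1 / (((t+i+1:ℕ):ℚ) * ((u+t+m+1:ℕ):ℚ) * (i.factorial:ℚ) * ((u+m).factorial:ℚ))) := by
  obtain ⟨q, rfl⟩ : ∃ q, j = q+2 := ⟨j-2, by omega⟩
  obtain ⟨r, rfl⟩ : ∃ r, m = q+1+r := ⟨m-q-1, by omega⟩
  subst hc hs
  have h := pureEntry_eval u t i (q+1) r ht
  rw [show i+1+(q+1)+1+r = i+1+1+(q+1+r) from by ring] at h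
  rw [show q+1+1 = q+2 from by omega] at h
  rw [h]
  rw [show q+1+r+1-(q+2) = r from by omega]
  rw [show u+t+(q+1)+1+r = u+t+(q+1+r)+1 from by ring]
  rw [show u+(q+1)+r = u+(q+1+r) from by ring]
  ring

/-- The Betti numbers a_i = C(c+t−1, i+t)·C(t−1+i, t) of a Gorenstein ring with
    two linear strands match the Boij–Söderberg decomposition:
    a_i = a·β_i(π_{σ_1}) + b·∑_{j=2}^{c−i} β_i(π_{σ_j}). -/
theorem stmt_10 (c s t : ℕ) (hc : 0 < c) (hs : 0 < s) (ht : 0 < t) (hst : 2 * t ≤ s)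
    (i : ℕ) (hi1 : 1 ≤ i) (hic : i ≤ c - 1) :
    ((c + t - 1).choose (i + t) * (t - 1 + i).choose t : ℚ) =
      (((s : ℚ) + 1 - t) * ((t + c - 1).factorial : ℚ) / (t.factorial : ℚ)) *
          pureEntry c (gorSeq c s t 1) i +
        (((s : ℚ) + 1 - 2 * t) * ((t + c - 1).factorial : ℚ) / (t.factorial : ℚ)) *
          ∑ j ∈ Finset.Icc 2 (c - i), pureEntry c (gorSeq c s t j) i := by
  obtain ⟨u, rfl⟩ : ∃ u, s = u + 2*t := ⟨s - 2*t, by omega⟩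
  obtain ⟨t', rfl⟩ : ∃ t', t = t'+1 := ⟨t-1, by omega⟩
  obtain ⟨i', rfl⟩ : ∃ i', i = i'+1 := ⟨i-1, by omega⟩
  obtain ⟨m, rfl⟩ : ∃ m, c = i'+1+1+m := ⟨c-i'-2, by omega⟩
  clear hc hs ht hst hi1 hic
  -- normalize the nat-subtraction expressions
  rw [show i'+1+1+m - (i'+1) = m+1 from by omega]
  rw [show i'+1+1+m + (t'+1) - 1 = i'+m+t'+2 from by omega]
  rw [show (t'+1) - 1 + (i'+1) = i'+t'+1 from by omega]
  rw [show t'+1 + (i'+1+1+m) - 1 = i'+m+t'+2 from by omega]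
  rw [show (i'+1) + (t'+1) = i'+t'+2 from by omega]
  -- evaluate the first pure diagram entry
  rw [pureEntry_eval₁ (u := u) (m := m) (show (1:ℕ) ≤ t'+1 from by omega) rfl rfl]
  -- evaluate the sum
  have hterm : ∀ j ∈ Finset.Icc 2 (m+1),
      pureEntry (i'+1+1+m) (gorSeq (i'+1+1+m) (u+2*(t'+1)) (t'+1) j) (i'+1) =
        (((u+(m+1-j)).factorial : ℚ) / (((m+1-j).factorial : ℚ))) *
          (1 / ((((t'+1)+i'+1:ℕ):ℚ) * ((u+(t'+1)+m+1:ℕ):ℚ) * (i'.factorial:ℚ)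
            * ((u+m).factorial:ℚ))) := by
    intro j hj
    simp only [Finset.mem_Icc] at hj
    exact pureEntry_eval'' (show (1:ℕ) ≤ t'+1 from by omega) rfl rfl hj.1 hj.2
  rw [Finset.sum_congr rfl hterm, ← Finset.sum_mul]
  have hre : ∑ j ∈ Finset.Icc 2 (m+1),
      (((u+(m+1-j)).factorial : ℚ) / (((m+1-j).factorial : ℚ)))
      = ∑ l ∈ Finset.range m, ((u+l).factorial : ℚ) / (l.factorial : ℚ) := by
    refine Finset.sum_nbij' (fun j => m+1-j) (fun l => m+1-l) ?_ ?_ ?_ ?_ ?_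
    · intro x hx; simp only [Finset.mem_Icc] at hx
      show m+1-x ∈ Finset.range m; simp only [Finset.mem_range]; omega
    · intro x hx; simp only [Finset.mem_range] at hx
      show m+1-x ∈ Finset.Icc 2 (m+1); simp only [Finset.mem_Icc]; omega
    · intro x hx; simp only [Finset.mem_Icc] at hx
      show m+1-(m+1-x) = x; omega
    · intro x hx; simp only [Finset.mem_range] at hx
      show m+1-(m+1-x) = x; omega
    · intro x hx; rfl
  rw [hre, hockey u m]
  -- expand binomial coefficients
  rw [Nat.cast_choose ℚ (show i'+t'+2 ≤ i'+m+t'+2 from by omega)]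
  rw [Nat.cast_choose ℚ (show t'+1 ≤ i'+t'+1 from by omega)]
  rw [show i'+m+t'+2 - (i'+t'+2) = m from by omega]
  rw [show i'+t'+1 - (t'+1) = i' from by omega]
  have hG : ((i'+t'+2).factorial : ℚ) = ((i':ℚ)+t'+2) * ((i'+t'+1).factorial : ℚ) := by
    rw [show i'+t'+2 = (i'+t'+1)+1 from by ring, Nat.factorial_succ]
    push_cast; ring
  rw [hG]
  have n1 : ((i'+m+t'+2).factorial : ℚ) ≠ 0 := Nat.cast_ne_zero.mpr (Nat.factorial_ne_zero _)
  have n2 : ((i'+t'+1).factorial : ℚ) ≠ 0 := Nat.cast_ne_zero.mpr (Nat.factorial_ne_zero _)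
  have n3 : (((t'+1).factorial : ℚ)) ≠ 0 := Nat.cast_ne_zero.mpr (Nat.factorial_ne_zero _)
  have n4 : ((i'.factorial : ℚ)) ≠ 0 := Nat.cast_ne_zero.mpr (Nat.factorial_ne_zero _)
  have n5 : ((m.factorial : ℚ)) ≠ 0 := Nat.cast_ne_zero.mpr (Nat.factorial_ne_zero _)
  have n6 : (((u+m).factorial : ℚ)) ≠ 0 := Nat.cast_ne_zero.mpr (Nat.factorial_ne_zero _)
  have n7 : ((i':ℚ)+t'+2) ≠ 0 := by positivity
  have n8 : ((u:ℚ)+1) ≠ 0 := by positivity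
  have n9 : (((t'+1)+i'+1:ℕ):ℚ) ≠ 0 := by positivity
  have n10 : ((u+(t'+1)+m+1:ℕ):ℚ) ≠ 0 := by positivity
  push_cast
  push_cast at n9 n10
  field_simp
  ring
end

section
/- For positive integers s, t, c with s ≥ 2t and any i with 1 ≤ i ≤ c−1, the identity (s+c−i−t)/(s+1−2t) = (s+1−t)/(s+1−2t) + ∑_{j=2}^{c−i} C(c−1−i, j−1)/C(s−2t+c−1−i, j−1) holds. -/
open Finset

lemma trinom (a b k : ℕ) (hk : k ≤ a) :
    (a + b).choose k * (a - k + b).choose b = (a + b).choose b * a.choose k := by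
  have h1 := Nat.choose_mul (n := a + b) (k := k + b) (s := k) (by omega)
  have h2 := Nat.choose_mul (n := a + b) (k := k + b) (s := b) (by omega)
  have e1 : a + b - k = a - k + b := by omega
  have e2 : a + b - b = a := by omega
  have e3 : k + b - k = b := by omega
  have e4 : k + b - b = k := by omega
  rw [e1, e3] at h1
  rw [e2, e4] at h2
  have hsym : (k + b).choose k = (k + b).choose b := by
    have := Nat.choose_symm (Nat.le_add_right k b)
    rw [e3] at this
    exact this.symm
  rw [hsym] at h1
  omega

lemma key_s12 (a b : ℕ) :
    ∑ k ∈ Finset.range (a + 1), ((a.choose k : ℚ) / ((a + b).choose k : ℚ))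
      = (a + b + 1) / (b + 1) := by
  have hCb : ((a + b).choose b : ℚ) ≠ 0 :=
    Nat.cast_ne_zero.mpr (Nat.choose_pos (by omega)).ne'
  have step : ∀ k ∈ Finset.range (a + 1),
      ((a.choose k : ℚ) / ((a + b).choose k : ℚ))
        = ((a - k + b).choose b : ℚ) / ((a + b).choose b : ℚ) := by
    intro k hk
    rw [Finset.mem_range] at hk
    have hk' : k ≤ a := by omega
    have h := trinom a b k hk'
    have hCk : ((a + b).choose k : ℚ) ≠ 0 :=
      Nat.cast_ne_zero.mpr (Nat.choose_pos (by omega)).ne'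
    field_simp
    have := congrArg (Nat.cast (R := ℚ)) h
    push_cast at this
    linarith [this]
  rw [Finset.sum_congr rfl step, ← Finset.sum_div]
  have hre : ∑ k ∈ Finset.range (a + 1), (a - k + b).choose b
      = ∑ m ∈ Finset.Icc b (a + b), m.choose b := by
    refine Finset.sum_nbij' (fun k => a - k + b) (fun m => a + b - m) ?_ ?_ ?_ ?_ ?_
    · intro k hk; simp only [Finset.mem_range] at hk; simp only [Finset.mem_Icc]; omega
    · intro m hm; simp only [Finset.mem_Icc] at hm; simp only [Finset.mem_range]; omega
    · intro k hk; simp only [Finset.mem_range] at hk; omega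
    · intro m hm; simp only [Finset.mem_Icc] at hm; omega
    · intro k hk; rfl
  have hsum : ∑ k ∈ Finset.range (a + 1), ((a - k + b).choose b : ℚ)
      = ((a + b + 1).choose (b + 1) : ℚ) := by
    calc (∑ k ∈ Finset.range (a + 1), ((a - k + b).choose b : ℚ))
        = ((∑ k ∈ Finset.range (a + 1), (a - k + b).choose b : ℕ) : ℚ) := by push_cast; rfl
      _ = _ := by rw [hre, Nat.sum_Icc_choose]
  rw [hsum]
  have hmul := Nat.add_one_mul_choose_eq (a + b) b
  have hmul' : ((a + b + 1) : ℚ) * ((a + b).choose b : ℚ)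
      = ((a + b + 1).choose (b + 1) : ℚ) * (b + 1) := by
    exact_mod_cast congrArg (Nat.cast (R := ℚ)) hmul
  have hb1 : ((b : ℚ) + 1) ≠ 0 := by positivity
  field_simp
  linarith [hmul']

/-- The binomial identity used for the positive Betti numbers in the Gorenstein
    Boij–Söderberg decomposition. -/
theorem stmt_12 (s t c : ℕ) (hs : 0 < s) (ht : 0 < t) (hc : 0 < c) (hst : 2 * t ≤ s)
    (i : ℕ) (hi1 : 1 ≤ i) (hic : i ≤ c - 1) :
    ((s : ℚ) + c - i - t) / ((s : ℚ) + 1 - 2 * t) =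
      ((s : ℚ) + 1 - t) / ((s : ℚ) + 1 - 2 * t) +
        ∑ j ∈ Finset.Icc 2 (c - i),
          ((c - 1 - i).choose (j - 1) : ℚ) / ((s - 2 * t + c - 1 - i).choose (j - 1) : ℚ) := by
  set a := c - 1 - i with ha
  set b := s - 2 * t with hb
  have hci : c - i = a + 1 := by omega
  have hab : s - 2 * t + c - 1 - i = a + b := by omega
  rw [hab, hci]
  have hre : ∑ j ∈ Finset.Icc 2 (a + 1),
      ((a.choose (j - 1) : ℚ) / ((a + b).choose (j - 1) : ℚ))
      = ∑ k ∈ Finset.Icc 1 a, ((a.choose k : ℚ) / ((a + b).choose k : ℚ)) := by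
    refine Finset.sum_nbij' (fun j => j - 1) (fun k => k + 1) ?_ ?_ ?_ ?_ ?_
    · intro j hj; simp only [Finset.mem_Icc] at hj ⊢; omega
    · intro k hk; simp only [Finset.mem_Icc] at hk ⊢; omega
    · intro j hj; simp only [Finset.mem_Icc] at hj; omega
    · intro k hk; simp only [Finset.mem_Icc] at hk; omega
    · intro j hj; rfl
  rw [hre]
  have hsplit : ∑ k ∈ Finset.Icc 1 a, ((a.choose k : ℚ) / ((a + b).choose k : ℚ))
      = ((a : ℚ) + b + 1) / ((b : ℚ) + 1) - 1 := by
    have h0 : Finset.range (a + 1) = insert 0 (Finset.Icc 1 a) := by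
      ext x; simp only [Finset.mem_range, Finset.mem_insert, Finset.mem_Icc]; omega
    have hkey := key_s12 a b
    rw [h0, Finset.sum_insert (by simp)] at hkey
    simp only [Nat.choose_zero_right, Nat.cast_one] at hkey
    push_cast at hkey ⊢
    linarith [hkey]
  rw [hsplit]
  have hD : ((s : ℚ) + 1 - 2 * t) = (b : ℚ) + 1 := by
    have : (b : ℚ) = (s : ℚ) - 2 * t := by
      rw [hb]; push_cast [Nat.cast_sub hst]; ring
    rw [this]; ring
  have haq : (a : ℚ) = (c : ℚ) - 1 - i := by
    have h' : a + i + 1 = c := by omega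
    have := congrArg (Nat.cast (R := ℚ)) h'
    push_cast at this
    linarith
  have hb1 : ((b : ℚ) + 1) ≠ 0 := by positivity
  rw [hD]
  field_simp
  rw [haq]
  ring
end

section
/- Let c ≥ 2, and let σ_1 < σ_2 < ... < σ_t be strictly increasing integer degree sequences of length c+1 (ordered by the componentwise partial order on equal-length sequences). Suppose there exist positive rationals a_1, ..., a_t and an integer m such that ∑_i a_i π_{σ_i} = ∑_i a_i π_{m + σ_{i}^*} as diagrams. Then a_i = a_{t+1−i} and σ_i = m + σ_{t+1−i}^* for all i. -/
/-- The pure diagram π_σ of a strictly increasing degree sequence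
    σ = (d_0,...,d_c), as a table of rational entries indexed by homological
    degree i ∈ ℕ and internal degree j ∈ ℤ: β_{i,j} = ∏_{k≠i} 1/|d_i − d_k| if
    j = d_i, and 0 otherwise. -/
def pureDiagram (c : ℕ) (σ : Fin (c + 1) → ℤ) : ℕ → ℤ → ℚ := fun i j =>
  ∑ k : Fin (c + 1),
    if (k : ℕ) = i ∧ σ k = j then
      ∏ l ∈ Finset.univ.erase k, (1 : ℚ) / ((|σ k - σ l| : ℤ) : ℚ)
    else 0

section BSAux
open Finset

lemma entry_nonneg {c : ℕ} (σ : Fin (c + 1) → ℤ) (p : ℕ) (q : ℤ) :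
    0 ≤ pureDiagram c σ p q := by
  unfold pureDiagram
  refine Finset.sum_nonneg fun k _ => ?_
  split
  · refine Finset.prod_nonneg fun l _ => ?_
    apply one_div_nonneg.mpr
    exact_mod_cast abs_nonneg _
  · exact le_refl 0

lemma entry_pos {c : ℕ} {σ : Fin (c + 1) → ℤ} (hσ : StrictMono σ) (k : Fin (c + 1)) :
    0 < pureDiagram c σ (k : ℕ) (σ k) := by
  unfold pureDiagram
  rw [Finset.sum_eq_single k]
  · rw [if_pos ⟨rfl, rfl⟩]
    refine Finset.prod_pos fun l hl => ?_
    have hlk : l ≠ k := (Finset.mem_erase.mp hl).1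
    have : σ l ≠ σ k := fun h => hlk (hσ.injective h)
    apply one_div_pos.mpr
    have : (0 : ℤ) < |σ k - σ l| := abs_pos.mpr (sub_ne_zero.mpr (Ne.symm this))
    exact_mod_cast this
  · intro k' _ hk'
    rw [if_neg]
    rintro ⟨h1, -⟩
    exact hk' (Fin.val_injective h1)
  · intro h; exact absurd (Finset.mem_univ k) h

lemma entry_zero {c : ℕ} (σ : Fin (c + 1) → ℤ) (p : ℕ) (q : ℤ)
    (h : ∀ k : Fin (c + 1), (k : ℕ) = p → σ k ≠ q) :
    pureDiagram c σ p q = 0 := by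
  unfold pureDiagram
  refine Finset.sum_eq_zero fun k _ => ?_
  rw [if_neg]
  rintro ⟨h1, h2⟩
  exact h k h1 h2

/-- A positive combination is positive at the corner of the first diagram. -/
lemma side_pos {c s : ℕ} (hs : 0 < s) (ρ : ℕ → Fin (c + 1) → ℤ)
    (hρ : StrictMono (ρ 0)) (b : ℕ → ℚ) (hb : ∀ j, j < s → 0 < b j) :
    0 < ∑ j ∈ range s, b j * pureDiagram c (ρ j) ((0 : Fin (c+1)) : ℕ) (ρ 0 0) := by
  refine Finset.sum_pos' (fun j hj => mul_nonneg (hb j (mem_range.mp hj)).le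
    (entry_nonneg _ _ _)) ⟨0, mem_range.mpr hs, ?_⟩
  exact mul_pos (hb 0 hs) (entry_pos hρ 0)

lemma min_le {c t s : ℕ} (ht : 0 < t) (σ ρ : ℕ → Fin (c + 1) → ℤ)
    (hσ0 : StrictMono (σ 0))
    (hρle : ∀ j, j < s → ∀ k, ρ 0 k ≤ ρ j k)
    (a b : ℕ → ℚ) (ha : ∀ i, i < t → 0 < a i)
    (heq : ∀ p q, ∑ i ∈ range t, a i * pureDiagram c (σ i) p q
         = ∑ j ∈ range s, b j * pureDiagram c (ρ j) p q)
    (k : Fin (c + 1)) : ρ 0 k ≤ σ 0 k := by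
  by_contra h
  push_neg at h
  have H := heq (k : ℕ) (σ 0 k)
  have hL : 0 < ∑ i ∈ range t, a i * pureDiagram c (σ i) (k : ℕ) (σ 0 k) := by
    refine Finset.sum_pos' (fun i hi => mul_nonneg (ha i (mem_range.mp hi)).le
      (entry_nonneg _ _ _)) ⟨0, mem_range.mpr ht, mul_pos (ha 0 ht) (entry_pos hσ0 k)⟩
  have hR : ∑ j ∈ range s, b j * pureDiagram c (ρ j) (k : ℕ) (σ 0 k) = 0 := by
    refine Finset.sum_eq_zero fun j hj => ?_
    rw [entry_zero, mul_zero]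
    intro k' hk'
    have : k' = k := Fin.val_injective hk'
    subst this
    exact (lt_of_lt_of_le h (hρle j (mem_range.mp hj) k')).ne'
  rw [H, hR] at hL
  exact lt_irrefl 0 hL

lemma min_eq {c t s : ℕ} (ht : 0 < t) (hs : 0 < s) (σ ρ : ℕ → Fin (c + 1) → ℤ)
    (hσ0 : StrictMono (σ 0)) (hρ0 : StrictMono (ρ 0))
    (hσle : ∀ i, i < t → ∀ k, σ 0 k ≤ σ i k)
    (hρle : ∀ j, j < s → ∀ k, ρ 0 k ≤ ρ j k)
    (a b : ℕ → ℚ) (ha : ∀ i, i < t → 0 < a i) (hb : ∀ j, j < s → 0 < b j)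
    (heq : ∀ p q, ∑ i ∈ range t, a i * pureDiagram c (σ i) p q
         = ∑ j ∈ range s, b j * pureDiagram c (ρ j) p q) :
    σ 0 = ρ 0 := by
  funext k
  exact le_antisymm (min_le hs ρ σ hρ0 hσle b a hb (fun p q => (heq p q).symm) k)
    (min_le ht σ ρ hσ0 hρle a b ha heq k)

lemma coeff_ge {c t s : ℕ} (ht : 0 < t) (hs : 0 < s) (σ ρ : ℕ → Fin (c + 1) → ℤ)
    (hσm : ∀ i, i < t → StrictMono (σ i)) (hρm : ∀ j, j < s → StrictMono (ρ j))
    (hσch : ∀ i i', i < i' → i' < t → (∀ k, σ i k ≤ σ i' k) ∧ σ i ≠ σ i')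
    (hρle : ∀ j, j < s → ∀ k, ρ 0 k ≤ ρ j k)
    (a b : ℕ → ℚ) (ha : ∀ i, i < t → 0 < a i) (hb : ∀ j, j < s → 0 < b j)
    (heq : ∀ p q, ∑ i ∈ range t, a i * pureDiagram c (σ i) p q
         = ∑ j ∈ range s, b j * pureDiagram c (ρ j) p q)
    (h0 : σ 0 = ρ 0) : ¬ a 0 < b 0 := by
  intro hlt
  rcases t with _ | t'
  · omega
  rcases s with _ | s'
  · omega
  have hb' : ∀ j, j < s' + 1 → 0 < Function.update b 0 (b 0 - a 0) j := by
    intro j hj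
    rcases j with _ | j
    · rw [Function.update_self]; exact sub_pos.mpr hlt
    · rw [Function.update_of_ne (Nat.succ_ne_zero j)]; exact hb _ hj
  have E : ∀ p q, ∑ i ∈ range t', a (i+1) * pureDiagram c (σ (i+1)) p q
      = ∑ j ∈ range (s'+1), Function.update b 0 (b 0 - a 0) j * pureDiagram c (ρ j) p q := by
    intro p q
    have H := heq p q
    rw [Finset.sum_range_succ' _ t', Finset.sum_range_succ' _ s'] at H
    rw [Finset.sum_range_succ' _ s']
    simp only [Function.update_of_ne (Nat.succ_ne_zero _), Function.update_self]
    rw [h0] at H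
    have e : (b 0 - a 0) * pureDiagram c (ρ 0) p q
        = b 0 * pureDiagram c (ρ 0) p q - a 0 * pureDiagram c (ρ 0) p q := sub_mul _ _ _
    rw [e]
    linarith
  rcases t' with _ | n
  · have := side_pos (Nat.succ_pos s') ρ (hρm 0 hs) (Function.update b 0 (b 0 - a 0)) hb'
    rw [show ((0 : Fin (c+1)) : ℕ) = 0 from rfl, ← E 0 (ρ 0 0)] at this
    simp at this
  · have h1 : σ 1 = ρ 0 := by
      refine min_eq (Nat.succ_pos n) (Nat.succ_pos s') (fun i => σ (i+1)) ρ
        (hσm 1 (by omega)) (hρm 0 hs) ?_ hρle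
        (fun i => a (i+1)) (Function.update b 0 (b 0 - a 0))
        (fun i hi => ha (i+1) (by omega)) hb' E
      intro i hi k
      rcases Nat.eq_zero_or_pos i with h | h
      · subst h; exact le_refl _
      · exact (hσch 1 (i+1) (by omega) (by omega)).1 k
    exact (hσch 0 1 zero_lt_one (by omega)).2 (h0.trans h1.symm)

lemma key_s17 {c : ℕ} : ∀ t s : ℕ, ∀ σ ρ : ℕ → Fin (c + 1) → ℤ, ∀ a b : ℕ → ℚ,
    (∀ i, i < t → StrictMono (σ i)) → (∀ j, j < s → StrictMono (ρ j)) →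
    (∀ i i', i < i' → i' < t → (∀ k, σ i k ≤ σ i' k) ∧ σ i ≠ σ i') →
    (∀ j j', j < j' → j' < s → (∀ k, ρ j k ≤ ρ j' k) ∧ ρ j ≠ ρ j') →
    (∀ i, i < t → 0 < a i) → (∀ j, j < s → 0 < b j) →
    (∀ p q, ∑ i ∈ range t, a i * pureDiagram c (σ i) p q
         = ∑ j ∈ range s, b j * pureDiagram c (ρ j) p q) →
    t = s ∧ ∀ i, i < t → a i = b i ∧ σ i = ρ i := by
  intro t
  induction t with
  | zero =>
    intro s σ ρ a b _ hρm _ _ _ hb heq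
    refine ⟨?_, fun i hi => absurd hi (by omega)⟩
    by_contra hne
    have hs : 0 < s := by omega
    have := side_pos hs ρ (hρm 0 hs) b hb
    rw [← heq] at this
    simp at this
  | succ t' IH =>
    intro s σ ρ a b hσm hρm hσch hρch ha hb heq
    have ht : 0 < t' + 1 := Nat.succ_pos _
    have hs : 0 < s := by
      by_contra hs0
      have : s = 0 := by omega
      subst this
      have := side_pos ht σ (hσm 0 ht) a ha
      rw [heq] at this
      simp at this
    have hσle : ∀ i, i < t' + 1 → ∀ k, σ 0 k ≤ σ i k := by
      intro i hi k
      rcases Nat.eq_zero_or_pos i with h | h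
      · subst h; exact le_refl _
      · exact (hσch 0 i h hi).1 k
    have hρle : ∀ j, j < s → ∀ k, ρ 0 k ≤ ρ j k := by
      intro j hj k
      rcases Nat.eq_zero_or_pos j with h | h
      · subst h; exact le_refl _
      · exact (hρch 0 j h hj).1 k
    have h0 : σ 0 = ρ 0 :=
      min_eq ht hs σ ρ (hσm 0 ht) (hρm 0 hs) hσle hρle a b ha hb heq
    have hab : a 0 = b 0 := by
      have h1 := coeff_ge ht hs σ ρ hσm hρm hσch hρle a b ha hb heq h0
      have h2 := coeff_ge hs ht ρ σ hρm hσm hρch hσle b a hb ha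
        (fun p q => (heq p q).symm) h0.symm
      exact le_antisymm (not_lt.mp h2) (not_lt.mp h1)
    obtain ⟨s', rfl⟩ : ∃ s', s = s' + 1 := ⟨s - 1, by omega⟩
    have E : ∀ p q, ∑ i ∈ range t', a (i+1) * pureDiagram c (σ (i+1)) p q
        = ∑ j ∈ range s', b (j+1) * pureDiagram c (ρ (j+1)) p q := by
      intro p q
      have H := heq p q
      rw [Finset.sum_range_succ' _ t', Finset.sum_range_succ' _ s', h0, hab] at H
      linarith
    obtain ⟨hts, hrest⟩ := IH s' (fun i => σ (i+1)) (fun j => ρ (j+1))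
      (fun i => a (i+1)) (fun j => b (j+1))
      (fun i hi => hσm (i+1) (by omega)) (fun j hj => hρm (j+1) (by omega))
      (fun i i' hii hi' => hσch (i+1) (i'+1) (by omega) (by omega))
      (fun j j' hjj hj' => hρch (j+1) (j'+1) (by omega) (by omega))
      (fun i hi => ha (i+1) (by omega)) (fun j hj => hb (j+1) (by omega)) E
    refine ⟨by omega, ?_⟩
    intro i hi
    rcases i with _ | i
    · exact ⟨hab, h0⟩
    · exact hrest i (by omega)

end BSAux

/-- Self-duality of the Boij–Söderberg decomposition: if a positive linear
    combination of pure diagrams along a chain σ_1 < ... < σ_t equals the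
    corresponding combination of the shifted duals m + σ_i^*, then the
    coefficients are palindromic and σ_i = m + σ_{t+1−i}^* for all i. -/
theorem stmt_17 (c : ℕ) (hc : 2 ≤ c) (t : ℕ) (ht : 0 < t)
    (σ : Fin t → Fin (c + 1) → ℤ) (hmono : ∀ i, StrictMono (σ i))
    (horder : ∀ i j : Fin t, i < j → (∀ k, σ i k ≤ σ j k) ∧ σ i ≠ σ j)
    (a : Fin t → ℚ) (ha : ∀ i, 0 < a i) (m : ℤ)
    (heq : ∀ p q, ∑ i, a i * pureDiagram c (σ i) p q =
      ∑ i, a i * pureDiagram c (fun k => m - σ i k.rev) p q) :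
    ∀ i : Fin t, a i = a i.rev ∧ σ i = fun k => m - σ i.rev k.rev := by
  set σ' : ℕ → Fin (c + 1) → ℤ := fun i => if h : i < t then σ ⟨i, h⟩ else σ ⟨0, ht⟩
    with hσ'def
  set a' : ℕ → ℚ := fun i => if h : i < t then a ⟨i, h⟩ else 1 with ha'def
  set ρ' : ℕ → Fin (c + 1) → ℤ := fun j => fun k => m - σ' (t - 1 - j) k.rev with hρ'def
  set b' : ℕ → ℚ := fun j => a' (t - 1 - j) with hb'def
  have hσ'eq : ∀ i : Fin t, σ' (i : ℕ) = σ i := by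
    intro i; simp only [hσ'def, dif_pos i.isLt, Fin.eta]
  have ha'eq : ∀ i : Fin t, a' (i : ℕ) = a i := by
    intro i; simp only [ha'def, dif_pos i.isLt, Fin.eta]
  have hrevval : ∀ i : Fin t, t - 1 - (i : ℕ) = (i.rev : ℕ) := by
    intro i; rw [Fin.val_rev]; omega
  have hρ'eq : ∀ i : Fin t, ρ' (i : ℕ) = fun k => m - σ i.rev k.rev := by
    intro i
    funext k
    simp only [hρ'def, hrevval i, hσ'eq i.rev]
  have hb'eq : ∀ i : Fin t, b' (i : ℕ) = a i.rev := by
    intro i; simp only [hb'def, hrevval i, ha'eq i.rev]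
  have hσm' : ∀ i, i < t → StrictMono (σ' i) := by
    intro i hi
    have := hσ'eq ⟨i, hi⟩
    simp only at this
    rw [this]; exact hmono _
  have hρm' : ∀ j, j < t → StrictMono (ρ' j) := by
    intro j hj k k' hkk
    simp only [hρ'def]
    have h1 : t - 1 - j < t := by omega
    have : σ' (t - 1 - j) k'.rev < σ' (t - 1 - j) k.rev :=
      hσm' _ h1 (Fin.rev_lt_rev.mpr hkk)
    omega
  have hσch' : ∀ i i', i < i' → i' < t →
      (∀ k, σ' i k ≤ σ' i' k) ∧ σ' i ≠ σ' i' := by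
    intro i i' hii hi'
    have hi : i < t := lt_trans hii hi'
    have h := horder ⟨i, hi⟩ ⟨i', hi'⟩ hii
    rw [show σ' i = σ ⟨i, hi⟩ from hσ'eq ⟨i, hi⟩,
        show σ' i' = σ ⟨i', hi'⟩ from hσ'eq ⟨i', hi'⟩]
    exact h
  have hρch' : ∀ j j', j < j' → j' < t →
      (∀ k, ρ' j k ≤ ρ' j' k) ∧ ρ' j ≠ ρ' j' := by
    intro j j' hjj hj'
    have hj : j < t := lt_trans hjj hj'
    have hA' : t - 1 - j' < t := by omega
    have hA : t - 1 - j < t := by omega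
    have hlt : t - 1 - j' < t - 1 - j := by omega
    have h := horder ⟨t - 1 - j', hA'⟩ ⟨t - 1 - j, hA⟩ hlt
    have e1 : σ' (t - 1 - j) = σ ⟨t - 1 - j, hA⟩ := hσ'eq ⟨t - 1 - j, hA⟩
    have e2 : σ' (t - 1 - j') = σ ⟨t - 1 - j', hA'⟩ := hσ'eq ⟨t - 1 - j', hA'⟩
    constructor
    · intro k
      simp only [hρ'def, e1, e2]
      have := h.1 k.rev
      omega
    · intro hcon
      apply h.2
      funext k
      have := congrFun hcon k.rev
      simp only [hρ'def, e1, e2, Fin.rev_rev] at this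
      omega
  have ha' : ∀ i, i < t → 0 < a' i := by
    intro i hi
    rw [show a' i = a ⟨i, hi⟩ from ha'eq ⟨i, hi⟩]
    exact ha _
  have hb' : ∀ j, j < t → 0 < b' j := by
    intro j hj
    rw [show b' j = a (⟨j, hj⟩ : Fin t).rev from hb'eq ⟨j, hj⟩]
    exact ha _
  have heq' : ∀ p q, ∑ i ∈ Finset.range t, a' i * pureDiagram c (σ' i) p q
      = ∑ j ∈ Finset.range t, b' j * pureDiagram c (ρ' j) p q := by
    intro p q
    rw [← Fin.sum_univ_eq_sum_range (fun i => a' i * pureDiagram c (σ' i) p q) t,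
        ← Fin.sum_univ_eq_sum_range (fun j => b' j * pureDiagram c (ρ' j) p q) t]
    calc ∑ i : Fin t, a' (i : ℕ) * pureDiagram c (σ' (i : ℕ)) p q
        = ∑ i : Fin t, a i * pureDiagram c (σ i) p q := by
          refine Finset.sum_congr rfl fun i _ => ?_
          rw [ha'eq i, hσ'eq i]
      _ = ∑ i : Fin t, a i * pureDiagram c (fun k => m - σ i k.rev) p q := heq p q
      _ = ∑ j : Fin t, b' (j : ℕ) * pureDiagram c (ρ' (j : ℕ)) p q := by
          refine Fintype.sum_equiv (Fin.revPerm) _ _ fun j => ?_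
          rw [hb'eq, hρ'eq]
          simp only [Fin.revPerm_apply, Fin.rev_rev]
  obtain ⟨-, hres⟩ := key_s17 t t σ' ρ' a' b' hσm' hρm' hσch' hρch' ha' hb' heq'
  intro i
  obtain ⟨h1, h2⟩ := hres (i : ℕ) i.isLt
  constructor
  · rw [← ha'eq i, h1, hb'eq i]
  · rw [← hσ'eq i, h2, hρ'eq i]
end

section
/- For positive integers d and c, and degree sequences σ_j = (0, 2, ..., c−j+1, n−1−j, ..., n−2, n) of length c+1 where n = c+d (i.e., σ_j has entries 0, then 2,3,...,c−j+1, then n−1−j, n−j, ..., n−2, then n), the identity d·c!·(β_0(π_{σ_1}) + β_0(π_{σ_c})) + (d−1)·c!·∑_{j=2}^{c−1} β_0(π_{σ_j}) = 1 holds, where β_0(π_σ) = ∏_{k=1}^{c} 1/σ_k. -/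
open Finset

/-- The degree sequence σ_j for stacked polytopes (the case s = d, t = 1 of the
    Gorenstein decomposition), with n = c + d: σ_j(0) = 0, σ_j(c) = n,
    σ_j(k) = k + 1 for 1 ≤ k ≤ c − j and σ_j(k) = n − c − 1 + k = d − 1 + k
    for c − j + 1 ≤ k ≤ c − 1. -/
def stackedSeq (d c j : ℕ) : ℕ → ℕ := fun k =>
  if k = 0 then 0
  else if k = c then c + d
  else if k ≤ c - j then k + 1
  else d - 1 + k

/-- β_0(π_{σ_j}) = ∏_{k=1}^{c} 1/σ_j(k). -/
def stackedBeta0 (d c j : ℕ) : ℚ :=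
  ∏ k ∈ Finset.Icc 1 c, (1 : ℚ) / ((stackedSeq d c j k : ℕ) : ℚ)

/-- closed form value of β₀ -/
def gfun (e b m : ℕ) : ℚ :=
  ((e + m).factorial : ℚ) /
    (((m + 1).factorial : ℚ) * ((b + e + 1).factorial : ℚ) * ((b : ℚ) + e + 3))

lemma factorial_cast_ne (m : ℕ) : ((m.factorial : ℚ)) ≠ 0 := by
  exact_mod_cast m.factorial_ne_zero

lemma prod_shift (e : ℕ) : ∀ M, e.factorial * ∏ k ∈ Icc 1 M, (e + k) = (e + M).factorial := by
  intro M
  induction M with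
  | zero => simp
  | succ M ih =>
    rw [Finset.prod_Icc_succ_top (by omega : 1 ≤ M + 1), ← mul_assoc, ih, mul_comm,
      show e + (M + 1) = (e + M) + 1 from rfl, Nat.factorial_succ]

lemma closedForm (e b : ℕ) : ∀ m, m ≤ b + 1 →
    stackedBeta0 (e + 1) (b + 2) (b + 2 - m) = gfun e b m := by
  intro m
  induction m with
  | zero =>
    intro _
    unfold stackedBeta0 gfun
    rw [Finset.prod_Icc_succ_top (by omega : 1 ≤ b + 2)]
    have hval : ∀ k ∈ Icc 1 (b + 1),
        (1 : ℚ) / ((stackedSeq (e + 1) (b + 2) (b + 2 - 0) k : ℕ) : ℚ)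
          = ((e + k : ℕ) : ℚ)⁻¹ := by
      intro k hk
      simp only [mem_Icc] at hk
      have hv : stackedSeq (e + 1) (b + 2) (b + 2 - 0) k = e + k := by
        simp only [stackedSeq]
        split_ifs <;> first | exact ‹False›.elim | omega
      rw [hv, one_div]
    rw [Finset.prod_congr rfl hval, Finset.prod_inv_distrib]
    have htop : stackedSeq (e + 1) (b + 2) (b + 2 - 0) (b + 2) = b + e + 3 := by
      simp only [stackedSeq]
      split_ifs <;> first | exact ‹False›.elim | omega
    rw [htop]
    have hp : (∏ k ∈ Icc 1 (b + 1), ((e + k : ℕ) : ℚ)) * ((e.factorial : ℕ) : ℚ)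
        = ((e + b + 1).factorial : ℚ) := by
      rw [← Nat.cast_prod, ← Nat.cast_mul, mul_comm, prod_shift e (b + 1),
        show e + (b + 1) = e + b + 1 from rfl]
    have hpe : (∏ k ∈ Icc 1 (b + 1), ((e + k : ℕ) : ℚ)) = ((e + b + 1).factorial : ℚ) / (e.factorial : ℚ) := by
      rw [eq_div_iff (factorial_cast_ne e)]
      exact_mod_cast hp
    rw [hpe]
    have h1 : ((e + b + 1).factorial : ℚ) ≠ 0 := factorial_cast_ne _
    have h2 : ((e).factorial : ℚ) ≠ 0 := factorial_cast_ne _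
    have h3 : ((b : ℚ) + e + 3) ≠ 0 := by positivity
    have h4 : ((b + e + 1).factorial : ℚ) ≠ 0 := factorial_cast_ne _
    rw [show ((b + e + 3 : ℕ) : ℚ) = ((b : ℚ) + e + 3) by push_cast; ring,
      show (e + 0) = e from rfl,
      show (e + b + 1).factorial = (b + e + 1).factorial by rw [show e + b + 1 = b + e + 1 by omega]]
    field_simp
    simp
  | succ m ih =>
    intro hm
    have hm' : m ≤ b + 1 := by omega
    have key : stackedBeta0 (e + 1) (b + 2) (b + 2 - (m + 1))
        = stackedBeta0 (e + 1) (b + 2) (b + 2 - m) * (((e : ℚ) + m + 1) / ((m : ℚ) + 2)) := by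
      unfold stackedBeta0
      have hmem : (m + 1) ∈ Icc 1 (b + 2) := by simp only [mem_Icc]; omega
      rw [← Finset.mul_prod_erase _ _ hmem, ← Finset.mul_prod_erase _ _ hmem]
      have heq : ∀ k ∈ (Icc 1 (b + 2)).erase (m + 1),
          (1 : ℚ) / ((stackedSeq (e + 1) (b + 2) (b + 2 - (m + 1)) k : ℕ) : ℚ)
            = (1 : ℚ) / ((stackedSeq (e + 1) (b + 2) (b + 2 - m) k : ℕ) : ℚ) := by
        intro k hk
        simp only [mem_erase, mem_Icc] at hk
        have : stackedSeq (e + 1) (b + 2) (b + 2 - (m + 1)) k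
            = stackedSeq (e + 1) (b + 2) (b + 2 - m) k := by
          simp only [stackedSeq]
          split_ifs <;> first | exact ‹False›.elim | omega
        rw [this]
      rw [Finset.prod_congr rfl heq]
      have hv1 : stackedSeq (e + 1) (b + 2) (b + 2 - (m + 1)) (m + 1) = m + 2 := by
        simp only [stackedSeq]
        split_ifs <;> first | exact ‹False›.elim | omega
      have hv2 : stackedSeq (e + 1) (b + 2) (b + 2 - m) (m + 1) = e + m + 1 := by
        simp only [stackedSeq]
        split_ifs <;> first | exact ‹False›.elim | omega
      rw [hv1, hv2]
      have h1 : ((m : ℚ) + 2) ≠ 0 := by positivity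
      have h2 : ((e : ℚ) + m + 1) ≠ 0 := by positivity
      rw [show ((m + 2 : ℕ) : ℚ) = (m : ℚ) + 2 by push_cast; ring,
        show ((e + m + 1 : ℕ) : ℚ) = (e : ℚ) + m + 1 by push_cast; ring,
        mul_right_comm]
      congr 1
      field_simp
    rw [key, ih hm']
    unfold gfun
    have h1 : ((m : ℚ) + 2) ≠ 0 := by positivity
    have h2 : ((b : ℚ) + e + 3) ≠ 0 := by positivity
    have h3 : ((m + 1).factorial : ℚ) ≠ 0 := factorial_cast_ne _
    have h5 : ((b + e + 1).factorial : ℚ) ≠ 0 := factorial_cast_ne _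
    rw [show (e + (m + 1)).factorial = (e + m + 1) * (e + m).factorial from Nat.factorial_succ (e + m),
      show (m + 1 + 1).factorial = (m + 1 + 1) * (m + 1).factorial from Nat.factorial_succ (m + 1)]
    push_cast
    field_simp
    ring

lemma tele (e : ℕ) : ∀ b,
    (e : ℚ) * ∑ m ∈ Icc 1 b, ((e + m).factorial : ℚ) / (((m + 1).factorial : ℚ))
      = ((b + e + 1).factorial : ℚ) / ((b + 1).factorial : ℚ) - ((e + 1).factorial : ℚ) := by
  intro b
  induction b with
  | zero =>
    simp [show (0 : ℕ) + e + 1 = e + 1 by omega]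
  | succ b ih =>
    rw [Finset.sum_Icc_succ_top (by omega : 1 ≤ b + 1), mul_add, ih]
    rw [show (e + (b + 1)).factorial = (b + e + 1).factorial by rw [show e + (b + 1) = b + e + 1 by omega],
      show (b + 1 + e + 1).factorial = (b + e + 1 + 1) * (b + e + 1).factorial by
        rw [show b + 1 + e + 1 = (b + e + 1) + 1 by omega, Nat.factorial_succ],
      show (b + 1 + 1).factorial = (b + 1 + 1) * (b + 1).factorial from Nat.factorial_succ (b + 1)]
    have h3 : ((b + 1).factorial : ℚ) ≠ 0 := factorial_cast_ne _
    have h5 : ((b + e + 1).factorial : ℚ) ≠ 0 := factorial_cast_ne _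
    push_cast
    field_simp
    ring

/-- The β_0 identity for the Boij–Söderberg decomposition of stacked polytopes:
    d·c!·(β_0(π_{σ_1}) + β_0(π_{σ_c})) + (d−1)·c!·∑_{j=2}^{c−1} β_0(π_{σ_j}) = 1. -/
theorem stmt_19 (d c : ℕ) (hd : 0 < d) (hc : 2 ≤ c) :
    (d : ℚ) * (c.factorial : ℚ) * (stackedBeta0 d c 1 + stackedBeta0 d c c) +
        ((d : ℚ) - 1) * (c.factorial : ℚ) *
          ∑ j ∈ Finset.Icc 2 (c - 1), stackedBeta0 d c j = 1 := by
  obtain ⟨e, rfl⟩ : ∃ e, d = e + 1 := ⟨d - 1, by omega⟩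
  obtain ⟨b, rfl⟩ : ∃ b, c = b + 2 := ⟨c - 2, by omega⟩
  clear hd hc
  have cf' : ∀ j, 1 ≤ j → j ≤ b + 2 →
      stackedBeta0 (e + 1) (b + 2) j = gfun e b (b + 2 - j) := by
    intro j h1 h2
    have := closedForm e b (b + 2 - j) (by omega)
    rwa [show b + 2 - (b + 2 - j) = j by omega] at this
  have hsum : ∑ j ∈ Finset.Icc 2 (b + 2 - 1), stackedBeta0 (e + 1) (b + 2) j
      = ∑ m ∈ Icc 1 b, gfun e b m := by
    rw [show b + 2 - 1 = b + 1 from rfl, ← Finset.Ico_add_one_right_eq_Icc, Finset.sum_Ico_eq_sum_range,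
      show b + 1 + 1 - 2 = b by omega]
    have step1 : ∀ i ∈ range b, stackedBeta0 (e + 1) (b + 2) (2 + i)
        = gfun e b (1 + (b - 1 - i)) := by
      intro i hi
      simp only [mem_range] at hi
      rw [cf' (2 + i) (by omega) (by omega), show b + 2 - (2 + i) = 1 + (b - 1 - i) by omega]
    rw [Finset.sum_congr rfl step1, Finset.sum_range_reflect (fun i => gfun e b (1 + i)) b,
      ← Finset.Ico_add_one_right_eq_Icc, Finset.sum_Ico_eq_sum_range, show b + 1 - 1 = b from rfl]
  rw [hsum, cf' 1 (by omega) (by omega), show b + 2 - 1 = b + 1 from rfl,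
    cf' (b + 2) (by omega) (by omega), show b + 2 - (b + 2) = 0 by omega]
  have hsum2 : ∑ m ∈ Icc 1 b, gfun e b m
      = (∑ m ∈ Icc 1 b, ((e + m).factorial : ℚ) / (((m + 1).factorial : ℚ))) /
        (((b + e + 1).factorial : ℚ) * ((b : ℚ) + e + 3)) := by
    rw [Finset.sum_div]
    refine Finset.sum_congr rfl fun m _ => ?_
    unfold gfun
    rw [div_div, mul_assoc]
  rw [hsum2]
  have htel := tele e b
  unfold gfun
  rw [show (e + (b + 1)).factorial = (b + e + 1).factorial by rw [show e + (b + 1) = b + e + 1 by omega],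
    show (b + 1 + 1).factorial = (b + 2).factorial by rw [show b + 1 + 1 = b + 2 from rfl],
    show (b + 2).factorial = (b + 2) * (b + 1).factorial from rfl,
    show (e + 0).factorial = e.factorial from rfl,
    show Nat.factorial (0 + 1) = 1 by norm_num]
  have hb1 : ((b + 1).factorial : ℚ) ≠ 0 := factorial_cast_ne _
  have hbe : ((b + e + 1).factorial : ℚ) ≠ 0 := factorial_cast_ne _
  have he : ((e).factorial : ℚ) ≠ 0 := factorial_cast_ne _
  have hn : ((b : ℚ) + e + 3) ≠ 0 := by positivity
  have hb2 : ((b : ℚ) + 2) ≠ 0 := by positivity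
  have hE1 : ((e + 1).factorial : ℚ) = ((e : ℚ) + 1) * (e.factorial : ℚ) := by
    rw [show (e + 1).factorial = (e + 1) * e.factorial from rfl]
    push_cast
    ring
  rw [hE1] at htel
  set S := ∑ m ∈ Icc 1 b, ((e + m).factorial : ℚ) / (((m + 1).factorial : ℚ)) with hS
  have expand : ((e : ℚ) + 1 - 1) * (((b : ℚ) + 2) * ((b + 1).factorial : ℚ)) *
      (S / (((b + e + 1).factorial : ℚ) * ((b : ℚ) + e + 3)))
      = (((b : ℚ) + 2) * ((b + 1).factorial : ℚ)) * ((e : ℚ) * S) /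
        (((b + e + 1).factorial : ℚ) * ((b : ℚ) + e + 3)) := by
    ring
  push_cast
  rw [expand, htel]
  field_simp
  ring
end
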